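/- Let κ₁, ..., κ₈ > 0 and v₁, v₃ ≥ 0. For N ≥ 1 consider the linear system in (a₁, a₂): (i) −v₁(κ₁ + κ₂) + κ₈v₃ + κ₁v₁(a₂ − a₁) − κ₂v₁a₁ − Nκ₆a₁ − Nκ₇a₂ = 0, (ii) κ₃ + (κ₃ + N²κ₄)(a₁ − a₂) − N²κ₅a₂ − Nκ₆a₁ − Nκ₇a₂ = 0, and the linear system in (a₃, a₄): (iii) −Nκ₆ − κ₈v₃ + κ₁v₁(a₄ − a₃) − κ₂v₁a₃ − Nκ₆a₃ − Nκ₇a₄ = 0, (iv) −Nκ₆ + (κ₃ + N²κ₄)(a₃ − a₄) − N²κ₅a₄ − Nκ₆a₃ − Nκ₇a₄ = 0. Then for all sufficiently large N both systems have unique solutions (a₁ᴺ, a₂ᴺ) and (a₃ᴺ, a₄ᴺ), and, with λ₁ := κ₁κ₄(κ₆ + κ₇)/(κ₄(κ₆ + κ₇) + κ₅κ₆) + κ₂κ₄κ₇/(κ₄(κ₆ + κ₇) + κ₅κ₆) and λ₂ := κ₁κ₅κ₆/(κ₄(κ₆ + κ₇) + κ₅κ₆) + κ₂(κ₄ + κ₅)κ₆/(κ₄(κ₆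 + κ₇) + κ₅κ₆), one has lim_{N→∞} N(κ₆a₁ᴺ + κ₇a₂ᴺ) = −(λ₁ + λ₂)v₁ + κ₈v₃ and lim_{N→∞} N(κ₆(1 + a₃ᴺ) + κ₇a₄ᴺ) = λ₂v₁ − κ₈v₃. -/

import Mathlib

open Filter

private theorem cw_solve2 (p q r s t u b₁ b₂ : ℝ) (hd : q*u - r*t ≠ 0) :
    (p + q*b₁ + r*b₂ = 0 ∧ s + t*b₁ + u*b₂ = 0) ↔
      (b₁ = (r*s - u*p)/(q*u - r*t) ∧ b₂ = (t*p - q*s)/(q*u - r*t)) := by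
  constructor
  · rintro ⟨h1, h2⟩
    constructor
    · rw [eq_div_iff hd]; linear_combination u*h1 - r*h2
    · rw [eq_div_iff hd]; linear_combination q*h2 - t*h1
  · rintro ⟨h1, h2⟩
    subst h1; subst h2
    constructor
    · field_simp
      ring
    · rw [div_eq_mul_inv, div_eq_mul_inv]
      linear_combination (-s) * mul_inv_cancel₀ hd

private theorem cw_tendsto (c₀ c₁ c₂ c₃ e₀ e₁ e₂ e₃ : ℝ) (hc : c₃ ≠ 0)
    (hden : ∀ N : ℕ, 1 ≤ N → c₀ + c₁*(N:ℝ) + c₂*(N:ℝ)^2 + c₃*(N:ℝ)^3 ≠ 0) :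
    Tendsto (fun N : ℕ => (e₀ + e₁*(N:ℝ) + e₂*(N:ℝ)^2 + e₃*(N:ℝ)^3)
        / (c₀ + c₁*(N:ℝ) + c₂*(N:ℝ)^2 + c₃*(N:ℝ)^3)) atTop (nhds (e₃/c₃)) := by
  have h0 : Tendsto (fun N : ℕ => ((N:ℝ))⁻¹) atTop (nhds 0) :=
    tendsto_inv_atTop_zero.comp tendsto_natCast_atTop_atTop
  have hp : ∀ a₀ a₁ a₂ a₃ : ℝ, Tendsto
      (fun N : ℕ => a₃ + a₂*((N:ℝ))⁻¹ + a₁*((N:ℝ))⁻¹^2 + a₀*((N:ℝ))⁻¹^3) atTop (nhds a₃) := by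
    intro a₀ a₁ a₂ a₃
    have h := (((tendsto_const_nhds : Tendsto (fun _ : ℕ => a₃) atTop (nhds a₃)).add
      (h0.const_mul a₂)).add
      ((h0.pow 2).const_mul a₁)).add ((h0.pow 3).const_mul a₀)
    simpa using h
  refine ((hp e₀ e₁ e₂ e₃).div (hp c₀ c₁ c₂ c₃) hc).congr' ?_
  filter_upwards [eventually_ge_atTop 1] with N hN
  have hN1 : (1:ℝ) ≤ (N:ℝ) := by exact_mod_cast hN
  have hN0 : ((N:ℝ)) ≠ 0 := by positivity
  have hd := hden N hN
  have hds : c₃ + c₂*((N:ℝ))⁻¹ + c₁*((N:ℝ))⁻¹^2 + c₀*((N:ℝ))⁻¹^3 ≠ 0 := by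
    intro h
    apply hd
    have h2 : (c₃ + c₂*((N:ℝ))⁻¹ + c₁*((N:ℝ))⁻¹^2 + c₀*((N:ℝ))⁻¹^3) * (N:ℝ)^3
        = c₀ + c₁*(N:ℝ) + c₂*(N:ℝ)^2 + c₃*(N:ℝ)^3 := by
      field_simp
      ring
    rw [← h2, h, zero_mul]
  simp only [Pi.div_apply]
  rw [div_eq_div_iff hds hd]
  field_simp
  ring

/-- Averaging computation for the main example of Cappelletti and Wiuf:
for all sufficiently large `N`, the two linear systems (i)–(ii) in `(a₁,a₂)`
and (iii)–(iv) in `(a₃,a₄)` have unique solutions `(a₁ᴺ,a₂ᴺ)` and `(a₃ᴺ,a₄ᴺ)`,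
and `N(κ₆a₁ᴺ + κ₇a₂ᴺ) → −(λ₁+λ₂)v₁ + κ₈v₃`,
`N(κ₆(1+a₃ᴺ) + κ₇a₄ᴺ) → λ₂v₁ − κ₈v₃` as `N → ∞`. -/
theorem cappelletti_wiuf_averaging
    (κ₁ κ₂ κ₃ κ₄ κ₅ κ₆ κ₇ κ₈ : ℝ)
    (h₁ : 0 < κ₁) (h₂ : 0 < κ₂) (h₃ : 0 < κ₃) (h₄ : 0 < κ₄) (h₅ : 0 < κ₅)
    (h₆ : 0 < κ₆) (h₇ : 0 < κ₇) (h₈ : 0 < κ₈)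
    (v₁ v₃ : ℝ) (hv₁ : 0 ≤ v₁) (hv₃ : 0 ≤ v₃)
    (lam₁ lam₂ : ℝ)
    (hlam₁ : lam₁ = κ₁ * (κ₄ * (κ₆ + κ₇)) / (κ₄ * (κ₆ + κ₇) + κ₅ * κ₆)
        + κ₂ * (κ₄ * κ₇) / (κ₄ * (κ₆ + κ₇) + κ₅ * κ₆))
    (hlam₂ : lam₂ = κ₁ * (κ₅ * κ₆) / (κ₄ * (κ₆ + κ₇) + κ₅ * κ₆)
        + κ₂ * ((κ₄ + κ₅) * κ₆) / (κ₄ * (κ₆ + κ₇) + κ₅ * κ₆)) :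
    ∃ (a₁ a₂ a₃ a₄ : ℕ → ℝ) (N₀ : ℕ), 1 ≤ N₀ ∧
      (∀ N : ℕ, N₀ ≤ N →
        (∀ b₁ b₂ : ℝ,
          (-(v₁ * (κ₁ + κ₂)) + κ₈ * v₃ + κ₁ * v₁ * (b₂ - b₁) - κ₂ * v₁ * b₁
              - (N : ℝ) * κ₆ * b₁ - (N : ℝ) * κ₇ * b₂ = 0 ∧
           κ₃ + (κ₃ + (N : ℝ) ^ 2 * κ₄) * (b₁ - b₂) - (N : ℝ) ^ 2 * κ₅ * b₂
              - (N : ℝ) * κ₆ * b₁ - (N : ℝ) * κ₇ * b₂ = 0)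
          ↔ (b₁ = a₁ N ∧ b₂ = a₂ N)) ∧
        (∀ b₃ b₄ : ℝ,
          (-((N : ℝ) * κ₆) - κ₈ * v₃ + κ₁ * v₁ * (b₄ - b₃) - κ₂ * v₁ * b₃
              - (N : ℝ) * κ₆ * b₃ - (N : ℝ) * κ₇ * b₄ = 0 ∧
           -((N : ℝ) * κ₆) + (κ₃ + (N : ℝ) ^ 2 * κ₄) * (b₃ - b₄)
              - (N : ℝ) ^ 2 * κ₅ * b₄
              - (N : ℝ) * κ₆ * b₃ - (N : ℝ) * κ₇ * b₄ = 0)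
          ↔ (b₃ = a₃ N ∧ b₄ = a₄ N))) ∧
      Tendsto (fun N : ℕ => (N : ℝ) * (κ₆ * a₁ N + κ₇ * a₂ N)) atTop
        (nhds (-(lam₁ + lam₂) * v₁ + κ₈ * v₃)) ∧
      Tendsto (fun N : ℕ => (N : ℝ) * (κ₆ * (1 + a₃ N) + κ₇ * a₄ N)) atTop
        (nhds (lam₂ * v₁ - κ₈ * v₃)) := by
  have hc₃ : (0:ℝ) < κ₅*κ₆ + κ₄*κ₇ + κ₄*κ₆ := by positivity
  have hDpos : ∀ x : ℝ, 1 ≤ x → 0 < (κ₂*κ₃*v₁) + (κ₃*κ₇ + κ₃*κ₆ + κ₂*κ₇*v₁ + κ₁*κ₇*v₁ + κ₁*κ₆*v₁)*x + ((κ₂*κ₅ + κ₂*κ₄ + κ₁*κ₅)*v₁)*x^2 + (κ₅*κ₆ + κ₄*κ₇ + κ₄*κ₆)*x^3 := by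
    intro x hx
    have hx0 : (0:ℝ) ≤ x := le_trans zero_le_one hx
    have t1 : (0:ℝ) ≤ (κ₃*κ₇ + κ₃*κ₆ + κ₂*κ₇*v₁ + κ₁*κ₇*v₁ + κ₁*κ₆*v₁)*x := mul_nonneg (by positivity) hx0
    have t2 : (0:ℝ) ≤ ((κ₂*κ₅ + κ₂*κ₄ + κ₁*κ₅)*v₁)*x^2 := mul_nonneg (by positivity) (by positivity)
    have t3 : (0:ℝ) < (κ₅*κ₆ + κ₄*κ₇ + κ₄*κ₆)*x^3 := mul_pos hc₃ (pow_pos (lt_of_lt_of_le one_pos hx) 3)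
    have t0 : (0:ℝ) ≤ (κ₂*κ₃*v₁) := by positivity
    linarith
  have hden : ∀ N : ℕ, 1 ≤ N → (κ₂*κ₃*v₁) + (κ₃*κ₇ + κ₃*κ₆ + κ₂*κ₇*v₁ + κ₁*κ₇*v₁ + κ₁*κ₆*v₁)*(N:ℝ) + ((κ₂*κ₅ + κ₂*κ₄ + κ₁*κ₅)*v₁)*(N:ℝ)^2 + (κ₅*κ₆ + κ₄*κ₇ + κ₄*κ₆)*(N:ℝ)^3 ≠ 0 := by
    intro N hN
    exact (hDpos (N:ℝ) (by exact_mod_cast hN)).ne'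
  refine ⟨fun N : ℕ => ((κ₁*v₁ - (N:ℝ)*κ₇)*κ₃ - (-(κ₃ + (N:ℝ)^2*κ₄ + (N:ℝ)^2*κ₅ + (N:ℝ)*κ₇))*(-(v₁*(κ₁+κ₂)) + κ₈*v₃))/((-(κ₁*v₁) - κ₂*v₁ - (N:ℝ)*κ₆)*(-(κ₃ + (N:ℝ)^2*κ₄ + (N:ℝ)^2*κ₅ + (N:ℝ)*κ₇)) - (κ₁*v₁ - (N:ℝ)*κ₇)*(κ₃ + (N:ℝ)^2*κ₄ - (N:ℝ)*κ₆)), fun N : ℕ => ((κ₃ + (N:ℝ)^2*κ₄ - (N:ℝ)*κ₆)*(-(v₁*(κ₁+κ₂)) + κ₈*v₃) - (-(κ₁*v₁) - κ₂*v₁ - (N:ℝ)*κ₆)*κ₃)/((-(κ₁*v₁) - κ₂*v₁ - (N:ℝ)*κ₆)*(-(κ₃ + (N:ℝ)^2*κ₄ + (N:ℝ)^2*κ₅ + (N:ℝ)*κ₇)) - (κ₁*v₁ - (N:ℝ)*κ₇)*(κ₃ + (N:ℝ)^2*κ₄ - (N:ℝ)*κ₆)), fun N : ℕ => ((κ₁*v₁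 - (N:ℝ)*κ₇)*(-((N:ℝ)*κ₆)) - (-(κ₃ + (N:ℝ)^2*κ₄ + (N:ℝ)^2*κ₅ + (N:ℝ)*κ₇))*(-((N:ℝ)*κ₆) - κ₈*v₃))/((-(κ₁*v₁) - κ₂*v₁ - (N:ℝ)*κ₆)*(-(κ₃ + (N:ℝ)^2*κ₄ + (N:ℝ)^2*κ₅ + (N:ℝ)*κ₇)) - (κ₁*v₁ - (N:ℝ)*κ₇)*(κ₃ + (N:ℝ)^2*κ₄ - (N:ℝ)*κ₆)), fun N : ℕ => ((κ₃ + (N:ℝ)^2*κ₄ - (N:ℝ)*κ₆)*(-((N:ℝ)*κ₆) - κ₈*v₃) - (-(κ₁*v₁) - κ₂*v₁ - (N:ℝ)*κ₆)*(-((N:ℝ)*κ₆)))/((-(κ₁*v₁) - κ₂*v₁ - (N:ℝ)*κ₆)*(-(κ₃ + (N:ℝ)^2*κ₄ + (N:ℝ)^2*κ₅ + (N:ℝ)*κ₇)) - (κ₁*v₁ - (N:ℝ)*κ₇)*(κ₃ + (N:ℝ)^2*κ₄ - (N:ℝ)*κ₆)),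
    1, le_rfl, ?_, ?_, ?_⟩
  · intro N hN
    have hNR : (1:ℝ) ≤ (N:ℝ) := by exact_mod_cast hN
    have hd : (-(κ₁*v₁) - κ₂*v₁ - (N:ℝ)*κ₆)*(-(κ₃ + (N:ℝ)^2*κ₄ + (N:ℝ)^2*κ₅ + (N:ℝ)*κ₇)) - (κ₁*v₁ - (N:ℝ)*κ₇)*(κ₃ + (N:ℝ)^2*κ₄ - (N:ℝ)*κ₆) ≠ 0 := by
      rw [show (-(κ₁*v₁) - κ₂*v₁ - (N:ℝ)*κ₆)*(-(κ₃ + (N:ℝ)^2*κ₄ + (N:ℝ)^2*κ₅ + (N:ℝ)*κ₇)) - (κ₁*v₁ - (N:ℝ)*κ₇)*(κ₃ + (N:ℝ)^2*κ₄ - (N:ℝ)*κ₆) = (κ₂*κ₃*v₁) + (κ₃*κ₇ + κ₃*κ₆ + κ₂*κ₇*v₁ + κ₁*κ₇*v₁ + κ₁*κ₆*v₁)*(N:ℝ) + ((κ₂*κ₅ + κ₂*κ₄ + κ₁*κ₅)*v₁)*(N:ℝ)^2 + (κ₅*κ₆ + κ₄*κ₇ + κ₄*κ₆)*(N:ℝ)^3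 from by ring]
      exact (hDpos (N:ℝ) hNR).ne'
    constructor
    · intro b₁ b₂
      have hkey := cw_solve2 (-(v₁*(κ₁+κ₂)) + κ₈*v₃) (-(κ₁*v₁) - κ₂*v₁ - (N:ℝ)*κ₆) (κ₁*v₁ - (N:ℝ)*κ₇) κ₃ (κ₃ + (N:ℝ)^2*κ₄ - (N:ℝ)*κ₆) (-(κ₃ + (N:ℝ)^2*κ₄ + (N:ℝ)^2*κ₅ + (N:ℝ)*κ₇)) b₁ b₂ hd
      constructor
      · rintro ⟨e1, e2⟩
        exact hkey.mp ⟨by linear_combination e1, by linear_combination e2⟩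
      · intro h
        obtain ⟨g1, g2⟩ := hkey.mpr h
        exact ⟨by linear_combination g1, by linear_combination g2⟩
    · intro b₃ b₄
      have hkey := cw_solve2 (-((N:ℝ)*κ₆) - κ₈*v₃) (-(κ₁*v₁) - κ₂*v₁ - (N:ℝ)*κ₆) (κ₁*v₁ - (N:ℝ)*κ₇) (-((N:ℝ)*κ₆)) (κ₃ + (N:ℝ)^2*κ₄ - (N:ℝ)*κ₆) (-(κ₃ + (N:ℝ)^2*κ₄ + (N:ℝ)^2*κ₅ + (N:ℝ)*κ₇)) b₃ b₄ hd
      constructor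
      · rintro ⟨e1, e2⟩
        exact hkey.mp ⟨by linear_combination e1, by linear_combination e2⟩
      · intro h
        obtain ⟨g1, g2⟩ := hkey.mpr h
        exact ⟨by linear_combination g1, by linear_combination g2⟩
  · have hval : (κ₅*κ₆*κ₈*v₃ + κ₄*κ₇*κ₈*v₃ + κ₄*κ₆*κ₈*v₃ - κ₂*κ₅*κ₆*v₁ - κ₂*κ₄*κ₇*v₁ - κ₂*κ₄*κ₆*v₁ - κ₁*κ₅*κ₆*v₁ - κ₁*κ₄*κ₇*v₁ - κ₁*κ₄*κ₆*v₁)/(κ₅*κ₆ + κ₄*κ₇ + κ₄*κ₆) = -(lam₁ + lam₂) * v₁ + κ₈ * v₃ := by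
      rw [hlam₁, hlam₂]
      have hne : κ₄ * (κ₆ + κ₇) + κ₅ * κ₆ ≠ 0 := by positivity
      field_simp
      ring
    rw [← hval]
    refine (cw_tendsto (κ₂*κ₃*v₁) (κ₃*κ₇ + κ₃*κ₆ + κ₂*κ₇*v₁ + κ₁*κ₇*v₁ + κ₁*κ₆*v₁) ((κ₂*κ₅ + κ₂*κ₄ + κ₁*κ₅)*v₁) (κ₅*κ₆ + κ₄*κ₇ + κ₄*κ₆) 0 (κ₃*κ₇*κ₈*v₃ + κ₃*κ₆*κ₈*v₃ - κ₂*κ₃*κ₆*v₁) 0 (κ₅*κ₆*κ₈*v₃ + κ₄*κ₇*κ₈*v₃ + κ₄*κ₆*κ₈*v₃ - κ₂*κ₅*κ₆*v₁ - κ₂*κ₄*κ₇*v₁ - κ₂*κ₄*κ₆*v₁ - κ₁*κ₅*κ₆*v₁ - κ₁*κ₄*κ₇*v₁ - κ₁*κ₄*κ₆*v₁) hc₃.ne' hden).congr' ?_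
    filter_upwards [eventually_ge_atTop 1] with N hN
    show (0 + (κ₃*κ₇*κ₈*v₃ + κ₃*κ₆*κ₈*v₃ - κ₂*κ₃*κ₆*v₁)*(N:ℝ) + 0*(N:ℝ)^2 + (κ₅*κ₆*κ₈*v₃ + κ₄*κ₇*κ₈*v₃ + κ₄*κ₆*κ₈*v₃ - κ₂*κ₅*κ₆*v₁ - κ₂*κ₄*κ₇*v₁ - κ₂*κ₄*κ₆*v₁ - κ₁*κ₅*κ₆*v₁ - κ₁*κ₄*κ₇*v₁ - κ₁*κ₄*κ₆*v₁)*(N:ℝ)^3)/((κ₂*κ₃*v₁) + (κ₃*κ₇ + κ₃*κ₆ + κ₂*κ₇*v₁ + κ₁*κ₇*v₁ + κ₁*κ₆*v₁)*(N:ℝ) + ((κ₂*κ₅ + κ₂*κ₄ + κ₁*κ₅)*v₁)*(N:ℝ)^2 + (κ₅*κ₆ + κ₄*κ₇ + κ₄*κ₆)*(N:ℝ)^3)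
        = (N:ℝ) * (κ₆ * (((κ₁*v₁ - (N:ℝ)*κ₇)*κ₃ - (-(κ₃ + (N:ℝ)^2*κ₄ + (N:ℝ)^2*κ₅ + (N:ℝ)*κ₇))*(-(v₁*(κ₁+κ₂)) + κ₈*v₃))/((-(κ₁*v₁) - κ₂*v₁ - (N:ℝ)*κ₆)*(-(κ₃ + (N:ℝ)^2*κ₄ + (N:ℝ)^2*κ₅ + (N:ℝ)*κ₇)) - (κ₁*v₁ - (N:ℝ)*κ₇)*(κ₃ + (N:ℝ)^2*κ₄ - (N:ℝ)*κ₆))) + κ₇ * (((κ₃ + (N:ℝ)^2*κ₄ - (N:ℝ)*κ₆)*(-(v₁*(κ₁+κ₂)) + κ₈*v₃) - (-(κ₁*v₁) - κ₂*v₁ - (N:ℝ)*κ₆)*κ₃)/((-(κ₁*v₁) - κ₂*v₁ - (N:ℝ)*κ₆)*(-(κ₃ + (N:ℝ)^2*κ₄ + (N:ℝ)^2*κ₅ + (N:ℝ)*κ₇)) - (κ₁*v₁ - (N:ℝ)*κ₇)*(κ₃ + (N:ℝ)^2*κ₄ - (N:ℝ)*κ₆))))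
    rw [show (κ₂*κ₃*v₁) + (κ₃*κ₇ + κ₃*κ₆ + κ₂*κ₇*v₁ + κ₁*κ₇*v₁ + κ₁*κ₆*v₁)*(N:ℝ) + ((κ₂*κ₅ + κ₂*κ₄ + κ₁*κ₅)*v₁)*(N:ℝ)^2 + (κ₅*κ₆ + κ₄*κ₇ + κ₄*κ₆)*(N:ℝ)^3 = (-(κ₁*v₁) - κ₂*v₁ - (N:ℝ)*κ₆)*(-(κ₃ + (N:ℝ)^2*κ₄ + (N:ℝ)^2*κ₅ + (N:ℝ)*κ₇)) - (κ₁*v₁ - (N:ℝ)*κ₇)*(κ₃ + (N:ℝ)^2*κ₄ - (N:ℝ)*κ₆) from by ring]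
    ring
  · have hval : (κ₂*κ₅*κ₆*v₁ + κ₂*κ₄*κ₆*v₁ + κ₁*κ₅*κ₆*v₁ - κ₅*κ₆*κ₈*v₃ - κ₄*κ₇*κ₈*v₃ - κ₄*κ₆*κ₈*v₃)/(κ₅*κ₆ + κ₄*κ₇ + κ₄*κ₆) = lam₂ * v₁ - κ₈ * v₃ := by
      rw [hlam₂]
      have hne : κ₄ * (κ₆ + κ₇) + κ₅ * κ₆ ≠ 0 := by positivity
      field_simp
      ring
    rw [← hval]
    refine (cw_tendsto (κ₂*κ₃*v₁) (κ₃*κ₇ + κ₃*κ₆ + κ₂*κ₇*v₁ + κ₁*κ₇*v₁ + κ₁*κ₆*v₁) ((κ₂*κ₅ + κ₂*κ₄ + κ₁*κ₅)*v₁) (κ₅*κ₆ + κ₄*κ₇ + κ₄*κ₆) 0 (κ₂*κ₃*κ₆*v₁ - κ₃*κ₇*κ₈*v₃ - κ₃*κ₆*κ₈*v₃) 0 (κ₂*κ₅*κ₆*v₁ + κ₂*κ₄*κ₆*v₁ + κ₁*κ₅*κ₆*v₁ - κ₅*κ₆*κ₈*v₃ - κ₄*κ₇*κ₈*v₃ -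 κ₄*κ₆*κ₈*v₃) hc₃.ne' hden).congr' ?_
    filter_upwards [eventually_ge_atTop 1] with N hN
    have hNR : (1:ℝ) ≤ (N:ℝ) := by exact_mod_cast hN
    have hd : (-(κ₁*v₁) - κ₂*v₁ - (N:ℝ)*κ₆)*(-(κ₃ + (N:ℝ)^2*κ₄ + (N:ℝ)^2*κ₅ + (N:ℝ)*κ₇)) - (κ₁*v₁ - (N:ℝ)*κ₇)*(κ₃ + (N:ℝ)^2*κ₄ - (N:ℝ)*κ₆) ≠ 0 := by
      rw [show (-(κ₁*v₁) - κ₂*v₁ - (N:ℝ)*κ₆)*(-(κ₃ + (N:ℝ)^2*κ₄ + (N:ℝ)^2*κ₅ + (N:ℝ)*κ₇)) - (κ₁*v₁ - (N:ℝ)*κ₇)*(κ₃ + (N:ℝ)^2*κ₄ - (N:ℝ)*κ₆) = (κ₂*κ₃*v₁) + (κ₃*κ₇ + κ₃*κ₆ + κ₂*κ₇*v₁ + κ₁*κ₇*v₁ + κ₁*κ₆*v₁)*(N:ℝ) + ((κ₂*κ₅ + κ₂*κ₄ + κ₁*κ₅)*v₁)*(N:ℝ)^2 + (κ₅*κ₆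 + κ₄*κ₇ + κ₄*κ₆)*(N:ℝ)^3 from by ring]
      exact hden N hN
    show (0 + (κ₂*κ₃*κ₆*v₁ - κ₃*κ₇*κ₈*v₃ - κ₃*κ₆*κ₈*v₃)*(N:ℝ) + 0*(N:ℝ)^2 + (κ₂*κ₅*κ₆*v₁ + κ₂*κ₄*κ₆*v₁ + κ₁*κ₅*κ₆*v₁ - κ₅*κ₆*κ₈*v₃ - κ₄*κ₇*κ₈*v₃ - κ₄*κ₆*κ₈*v₃)*(N:ℝ)^3)/((κ₂*κ₃*v₁) + (κ₃*κ₇ + κ₃*κ₆ + κ₂*κ₇*v₁ + κ₁*κ₇*v₁ + κ₁*κ₆*v₁)*(N:ℝ) + ((κ₂*κ₅ + κ₂*κ₄ + κ₁*κ₅)*v₁)*(N:ℝ)^2 + (κ₅*κ₆ + κ₄*κ₇ + κ₄*κ₆)*(N:ℝ)^3)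
        = (N:ℝ) * (κ₆ * (1 + (((κ₁*v₁ - (N:ℝ)*κ₇)*(-((N:ℝ)*κ₆)) - (-(κ₃ + (N:ℝ)^2*κ₄ + (N:ℝ)^2*κ₅ + (N:ℝ)*κ₇))*(-((N:ℝ)*κ₆) - κ₈*v₃))/((-(κ₁*v₁) - κ₂*v₁ - (N:ℝ)*κ₆)*(-(κ₃ + (N:ℝ)^2*κ₄ + (N:ℝ)^2*κ₅ + (N:ℝ)*κ₇)) - (κ₁*v₁ - (N:ℝ)*κ₇)*(κ₃ + (N:ℝ)^2*κ₄ - (N:ℝ)*κ₆)))) + κ₇ * (((κ₃ + (N:ℝ)^2*κ₄ - (N:ℝ)*κ₆)*(-((N:ℝ)*κ₆) - κ₈*v₃) - (-(κ₁*v₁) - κ₂*v₁ - (N:ℝ)*κ₆)*(-((N:ℝ)*κ₆)))/((-(κ₁*v₁) - κ₂*v₁ - (N:ℝ)*κ₆)*(-(κ₃ + (N:ℝ)^2*κ₄ + (N:ℝ)^2*κ₅ + (N:ℝ)*κ₇)) - (κ₁*v₁ - (N:ℝ)*κ₇)*(κ₃ + (N:ℝ)^2*κ₄ - (N:ℝ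)*κ₆))))
    rw [show (1:ℝ) + (((κ₁*v₁ - (N:ℝ)*κ₇)*(-((N:ℝ)*κ₆)) - (-(κ₃ + (N:ℝ)^2*κ₄ + (N:ℝ)^2*κ₅ + (N:ℝ)*κ₇))*(-((N:ℝ)*κ₆) - κ₈*v₃))/((-(κ₁*v₁) - κ₂*v₁ - (N:ℝ)*κ₆)*(-(κ₃ + (N:ℝ)^2*κ₄ + (N:ℝ)^2*κ₅ + (N:ℝ)*κ₇)) - (κ₁*v₁ - (N:ℝ)*κ₇)*(κ₃ + (N:ℝ)^2*κ₄ - (N:ℝ)*κ₆)))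
        = (((-(κ₁*v₁) - κ₂*v₁ - (N:ℝ)*κ₆)*(-(κ₃ + (N:ℝ)^2*κ₄ + (N:ℝ)^2*κ₅ + (N:ℝ)*κ₇)) - (κ₁*v₁ - (N:ℝ)*κ₇)*(κ₃ + (N:ℝ)^2*κ₄ - (N:ℝ)*κ₆)) + ((κ₁*v₁ - (N:ℝ)*κ₇)*(-((N:ℝ)*κ₆)) - (-(κ₃ + (N:ℝ)^2*κ₄ + (N:ℝ)^2*κ₅ + (N:ℝ)*κ₇))*(-((N:ℝ)*κ₆) - κ₈*v₃)))/((-(κ₁*v₁) - κ₂*v₁ - (N:ℝ)*κ₆)*(-(κ₃ + (N:ℝ)^2*κ₄ + (N:ℝ)^2*κ₅ + (N:ℝ)*κ₇)) - (κ₁*v₁ - (N:ℝ)*κ₇)*(κ₃ + (N:ℝ)^2*κ₄ - (N:ℝ)*κ₆)) from by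
      rw [add_div, div_self hd]]
    rw [show (κ₂*κ₃*v₁) + (κ₃*κ₇ + κ₃*κ₆ + κ₂*κ₇*v₁ + κ₁*κ₇*v₁ + κ₁*κ₆*v₁)*(N:ℝ) + ((κ₂*κ₅ + κ₂*κ₄ + κ₁*κ₅)*v₁)*(N:ℝ)^2 + (κ₅*κ₆ + κ₄*κ₇ + κ₄*κ₆)*(N:ℝ)^3 = (-(κ₁*v₁) - κ₂*v₁ - (N:ℝ)*κ₆)*(-(κ₃ + (N:ℝ)^2*κ₄ + (N:ℝ)^2*κ₅ + (N:ℝ)*κ₇)) - (κ₁*v₁ - (N:ℝ)*κ₇)*(κ₃ + (N:ℝ)^2*κ₄ - (N:ℝ)*κ₆) from by ring]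
    ring
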